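/- Let v¹, v² ∈ ℝ with v¹ > 0 and v¹ ≠ e^{v²}. Let F(v¹, v²) = ½(v¹)²v² + v¹e^{v²} + ½(v¹)²log v¹, let η = [[0,1],[1,0]] with inverse η^{αβ} (so η^{12} = η^{21} = 1, η^{11} = η^{22} = 0), and define the structure constants c_{αβ}^γ = Σ_ξ η^{γξ} ∂³F/(∂v^ξ∂v^α∂v^β). Then the vector field e with components e¹ = v¹/(v¹ − e^{v²}), e² = −1/(v¹ − e^{v²}) is the unity of the induced multiplication: Σ_γ e^γ c_{γα}^β = δ_α^β for all α, β ∈ {1,2}. -/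

import Mathlib

/-- The potential of the generalized Frobenius manifold associated with the
dispersionless Ablowitz–Ladik hierarchy:
`F = ½(v¹)²v² + v¹e^{v²} + ½(v¹)² log v¹`. -/
noncomputable def Fpot (v : Fin 2 → ℝ) : ℝ :=
  (v 0) ^ 2 * v 1 / 2 + v 0 * Real.exp (v 1) + (v 0) ^ 2 * Real.log (v 0) / 2

/-- The partial derivative of a function `(Fin 2 → ℝ) → ℝ` in the `i`-th coordinate
direction. -/
noncomputable def pd (i : Fin 2) (f : (Fin 2 → ℝ) → ℝ) : (Fin 2 → ℝ) → ℝ :=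
  fun v => deriv (fun t => f (Function.update v i t)) (v i)

/-- The inverse flat metric `η^{αβ}`, with `η^{12} = η^{21} = 1`, `η^{11} = η^{22} = 0`. -/
def etaInv : Fin 2 → Fin 2 → ℝ := ![![0, 1], ![1, 0]]

/-- The unity vector field `e¹ = v¹/(v¹ − e^{v²})`, `e² = −1/(v¹ − e^{v²})`. -/
noncomputable def unityVF (v : Fin 2 → ℝ) : Fin 2 → ℝ :=
  ![v 0 / (v 0 - Real.exp (v 1)), -1 / (v 0 - Real.exp (v 1))]

noncomputable def F1' (v : Fin 2 → ℝ) : ℝ :=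
  v 0 * v 1 + Real.exp (v 1) + v 0 * Real.log (v 0) + v 0 / 2
noncomputable def F2' (v : Fin 2 → ℝ) : ℝ := (v 0) ^ 2 / 2 + v 0 * Real.exp (v 1)
noncomputable def F11' (v : Fin 2 → ℝ) : ℝ := v 1 + Real.log (v 0) + 3 / 2
noncomputable def F12' (v : Fin 2 → ℝ) : ℝ := v 0 + Real.exp (v 1)
noncomputable def F22' (v : Fin 2 → ℝ) : ℝ := v 0 * Real.exp (v 1)

lemma pd_congr_pos {f g : (Fin 2 → ℝ) → ℝ}
    (h : ∀ w, 0 < w 0 → f w = g w) (i : Fin 2) (v : Fin 2 → ℝ) (hv : 0 < v 0) :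
    pd i f v = pd i g v := by
  unfold pd
  apply Filter.EventuallyEq.deriv_eq
  fin_cases i
  · filter_upwards [eventually_gt_nhds hv] with t ht
    exact h _ (by simpa using ht)
  · filter_upwards with t
    exact h _ (by simpa using hv)

lemma pd0_Fpot (v : Fin 2 → ℝ) (hv : 0 < v 0) : pd 0 Fpot v = F1' v := by
  unfold pd F1'
  have he : (fun t => Fpot (Function.update v 0 t)) =
      fun t : ℝ => t ^ 2 * v 1 / 2 + t * Real.exp (v 1) + t ^ 2 * Real.log t / 2 := by
    funext t; simp [Fpot, Function.update]
  rw [he]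
  have h : HasDerivAt (fun t : ℝ => t ^ 2 * v 1 / 2 + t * Real.exp (v 1) + t ^ 2 * Real.log t / 2)
      (v 0 * v 1 + Real.exp (v 1) + v 0 * Real.log (v 0) + v 0 / 2) (v 0) := by
    have h1 : HasDerivAt (fun t : ℝ => t ^ 2) (2 * v 0) (v 0) := by
      simpa using hasDerivAt_pow 2 (v 0)
    have h2 : HasDerivAt (fun t : ℝ => t ^ 2 * Real.log t)
        (2 * v 0 * Real.log (v 0) + v 0 ^ 2 * (v 0)⁻¹) (v 0) :=
      h1.mul (Real.hasDerivAt_log hv.ne')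
    have := ((h1.mul_const (v 1)).div_const 2).add
      ((hasDerivAt_id (v 0)).mul_const (Real.exp (v 1))) |>.add (h2.div_const 2)
    refine HasDerivAt.congr_deriv this ?_
    field_simp
    ring
  exact h.deriv

lemma pd1_Fpot (v : Fin 2 → ℝ) : pd 1 Fpot v = F2' v := by
  unfold pd F2'
  have he : (fun t => Fpot (Function.update v 1 t)) =
      fun t : ℝ => v 0 ^ 2 * t / 2 + v 0 * Real.exp t + v 0 ^ 2 * Real.log (v 0) / 2 := by
    funext t; simp [Fpot, Function.update]
  rw [he]
  have h : HasDerivAt (fun t : ℝ => v 0 ^ 2 * t / 2 + v 0 * Real.exp t + v 0 ^ 2 * Real.log (v 0) / 2)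
      (v 0 ^ 2 / 2 + v 0 * Real.exp (v 1)) (v 1) := by
    have := ((((hasDerivAt_id (v 1)).const_mul (v 0 ^ 2)).div_const 2).add
      ((Real.hasDerivAt_exp (v 1)).const_mul (v 0))).add_const (v 0 ^ 2 * Real.log (v 0) / 2)
    refine HasDerivAt.congr_deriv this ?_
    ring
  exact h.deriv

lemma pd0_F1 (v : Fin 2 → ℝ) (hv : 0 < v 0) : pd 0 F1' v = F11' v := by
  unfold pd F11'
  have he : (fun t => F1' (Function.update v 0 t)) =
      fun t : ℝ => t * v 1 + Real.exp (v 1) + t * Real.log t + t / 2 := by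
    funext t; simp [F1', Function.update]
  rw [he]
  have h : HasDerivAt (fun t : ℝ => t * v 1 + Real.exp (v 1) + t * Real.log t + t / 2)
      (v 1 + Real.log (v 0) + 3 / 2) (v 0) := by
    have h2 : HasDerivAt (fun t : ℝ => t * Real.log t)
        (1 * Real.log (v 0) + v 0 * (v 0)⁻¹) (v 0) :=
      (hasDerivAt_id (v 0)).mul (Real.hasDerivAt_log hv.ne')
    have := ((((hasDerivAt_id (v 0)).mul_const (v 1)).add_const (Real.exp (v 1))).add h2).add
      ((hasDerivAt_id (v 0)).div_const 2)
    refine HasDerivAt.congr_deriv this ?_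
    field_simp
    ring
  exact h.deriv

lemma pd1_F1 (v : Fin 2 → ℝ) : pd 1 F1' v = F12' v := by
  unfold pd F12'
  have he : (fun t => F1' (Function.update v 1 t)) =
      fun t : ℝ => v 0 * t + Real.exp t + v 0 * Real.log (v 0) + v 0 / 2 := by
    funext t; simp [F1', Function.update]
  rw [he]
  have h : HasDerivAt (fun t : ℝ => v 0 * t + Real.exp t + v 0 * Real.log (v 0) + v 0 / 2)
      (v 0 + Real.exp (v 1)) (v 1) := by
    have := ((((hasDerivAt_id (v 1)).const_mul (v 0)).add (Real.hasDerivAt_exp (v 1))).add_const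
      (v 0 * Real.log (v 0))).add_const (v 0 / 2)
    refine HasDerivAt.congr_deriv this ?_
    ring
  exact h.deriv

lemma pd0_F2 (v : Fin 2 → ℝ) : pd 0 F2' v = F12' v := by
  unfold pd F12'
  have he : (fun t => F2' (Function.update v 0 t)) =
      fun t : ℝ => t ^ 2 / 2 + t * Real.exp (v 1) := by
    funext t; simp [F2', Function.update]
  rw [he]
  have h : HasDerivAt (fun t : ℝ => t ^ 2 / 2 + t * Real.exp (v 1))
      (v 0 + Real.exp (v 1)) (v 0) := by
    have h1 : HasDerivAt (fun t : ℝ => t ^ 2) (2 * v 0) (v 0) := by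
      simpa using hasDerivAt_pow 2 (v 0)
    have := (h1.div_const 2).add ((hasDerivAt_id (v 0)).mul_const (Real.exp (v 1)))
    refine HasDerivAt.congr_deriv this ?_
    ring
  exact h.deriv

lemma pd1_F2 (v : Fin 2 → ℝ) : pd 1 F2' v = F22' v := by
  unfold pd F22'
  have he : (fun t => F2' (Function.update v 1 t)) =
      fun t : ℝ => v 0 ^ 2 / 2 + v 0 * Real.exp t := by
    funext t; simp [F2', Function.update]
  rw [he]
  have h : HasDerivAt (fun t : ℝ => v 0 ^ 2 / 2 + v 0 * Real.exp t)
      (v 0 * Real.exp (v 1)) (v 1) := by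
    have := (((Real.hasDerivAt_exp (v 1)).const_mul (v 0))).const_add (v 0 ^ 2 / 2)
    convert this using 1
  exact h.deriv

lemma pd0_F11 (v : Fin 2 → ℝ) (hv : 0 < v 0) : pd 0 F11' v = 1 / v 0 := by
  unfold pd
  have he : (fun t => F11' (Function.update v 0 t)) =
      fun t : ℝ => Real.log t + (v 1 + 3 / 2) := by
    funext t; simp [F11', Function.update]; ring
  rw [he]
  have h : HasDerivAt (fun t : ℝ => Real.log t + (v 1 + 3 / 2)) ((v 0)⁻¹) (v 0) :=
    (Real.hasDerivAt_log hv.ne').add_const _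
  rw [h.deriv, one_div]

lemma pd1_F11 (v : Fin 2 → ℝ) : pd 1 F11' v = 1 := by
  unfold pd
  have he : (fun t => F11' (Function.update v 1 t)) =
      fun t : ℝ => t + (Real.log (v 0) + 3 / 2) := by
    funext t; simp [F11', Function.update]; ring
  rw [he]
  exact ((hasDerivAt_id (v 1)).add_const _).deriv

lemma pd0_F12 (v : Fin 2 → ℝ) : pd 0 F12' v = 1 := by
  unfold pd
  have he : (fun t => F12' (Function.update v 0 t)) =
      fun t : ℝ => t + Real.exp (v 1) := by
    funext t; simp [F12', Function.update]
  rw [he]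
  exact ((hasDerivAt_id (v 0)).add_const _).deriv

lemma pd1_F12 (v : Fin 2 → ℝ) : pd 1 F12' v = Real.exp (v 1) := by
  unfold pd
  have he : (fun t => F12' (Function.update v 1 t)) =
      fun t : ℝ => Real.exp t + v 0 := by
    funext t; simp [F12', Function.update]; ring
  rw [he]
  exact ((Real.hasDerivAt_exp (v 1)).add_const _).deriv

lemma pd0_F22 (v : Fin 2 → ℝ) : pd 0 F22' v = Real.exp (v 1) := by
  unfold pd
  have he : (fun t => F22' (Function.update v 0 t)) =
      fun t : ℝ => t * Real.exp (v 1) := by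
    funext t; simp [F22', Function.update]
  rw [he]
  have h : HasDerivAt (fun t : ℝ => t * Real.exp (v 1)) (Real.exp (v 1)) (v 0) := by
    simpa using (hasDerivAt_id (v 0)).mul_const (Real.exp (v 1))
  exact h.deriv

lemma pd1_F22 (v : Fin 2 → ℝ) : pd 1 F22' v = v 0 * Real.exp (v 1) := by
  unfold pd
  have he : (fun t => F22' (Function.update v 1 t)) =
      fun t : ℝ => v 0 * Real.exp t := by
    funext t; simp [F22', Function.update]
  rw [he]
  exact ((Real.hasDerivAt_exp (v 1)).const_mul (v 0)).deriv

-- second derivatives of Fpot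
lemma pd00 (v : Fin 2 → ℝ) (hv : 0 < v 0) : pd 0 (pd 0 Fpot) v = F11' v := by
  rw [pd_congr_pos (fun w hw => pd0_Fpot w hw) 0 v hv]; exact pd0_F1 v hv
lemma pd10 (v : Fin 2 → ℝ) (hv : 0 < v 0) : pd 1 (pd 0 Fpot) v = F12' v := by
  rw [pd_congr_pos (fun w hw => pd0_Fpot w hw) 1 v hv]; exact pd1_F1 v
lemma pd01 (v : Fin 2 → ℝ) (hv : 0 < v 0) : pd 0 (pd 1 Fpot) v = F12' v := by
  rw [pd_congr_pos (fun w _ => pd1_Fpot w) 0 v hv]; exact pd0_F2 v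
lemma pd11 (v : Fin 2 → ℝ) (hv : 0 < v 0) : pd 1 (pd 1 Fpot) v = F22' v := by
  rw [pd_congr_pos (fun w _ => pd1_Fpot w) 1 v hv]; exact pd1_F2 v

-- third derivatives
lemma pd000 (v : Fin 2 → ℝ) (hv : 0 < v 0) : pd 0 (pd 0 (pd 0 Fpot)) v = 1 / v 0 := by
  rw [pd_congr_pos (fun w hw => pd00 w hw) 0 v hv]; exact pd0_F11 v hv
lemma pd100 (v : Fin 2 → ℝ) (hv : 0 < v 0) : pd 1 (pd 0 (pd 0 Fpot)) v = 1 := by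
  rw [pd_congr_pos (fun w hw => pd00 w hw) 1 v hv]; exact pd1_F11 v
lemma pd010 (v : Fin 2 → ℝ) (hv : 0 < v 0) : pd 0 (pd 1 (pd 0 Fpot)) v = 1 := by
  rw [pd_congr_pos (fun w hw => pd10 w hw) 0 v hv]; exact pd0_F12 v
lemma pd110 (v : Fin 2 → ℝ) (hv : 0 < v 0) : pd 1 (pd 1 (pd 0 Fpot)) v = Real.exp (v 1) := by
  rw [pd_congr_pos (fun w hw => pd10 w hw) 1 v hv]; exact pd1_F12 v
lemma pd001 (v : Fin 2 → ℝ) (hv : 0 < v 0) : pd 0 (pd 0 (pd 1 Fpot)) v = 1 := by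
  rw [pd_congr_pos (fun w hw => pd01 w hw) 0 v hv]; exact pd0_F12 v
lemma pd101 (v : Fin 2 → ℝ) (hv : 0 < v 0) : pd 1 (pd 0 (pd 1 Fpot)) v = Real.exp (v 1) := by
  rw [pd_congr_pos (fun w hw => pd01 w hw) 1 v hv]; exact pd1_F12 v
lemma pd011 (v : Fin 2 → ℝ) (hv : 0 < v 0) : pd 0 (pd 1 (pd 1 Fpot)) v = Real.exp (v 1) := by
  rw [pd_congr_pos (fun w hw => pd11 w hw) 0 v hv]; exact pd0_F22 v
lemma pd111 (v : Fin 2 → ℝ) (hv : 0 < v 0) : pd 1 (pd 1 (pd 1 Fpot)) v = v 0 * Real.exp (v 1) := by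
  rw [pd_congr_pos (fun w hw => pd11 w hw) 1 v hv]; exact pd1_F22 v

/-- The vector field `e` with components `e¹ = v¹/(v¹ − e^{v²})`,
`e² = −1/(v¹ − e^{v²})` is the unity of the multiplication with structure constants
`c_{αβ}^γ = Σ_ξ η^{γξ} ∂³F/(∂v^ξ∂v^α∂v^β)`: one has `Σ_γ e^γ c_{γα}^β = δ_α^β`. -/
theorem unity_of_frobenius_multiplication
    (v : Fin 2 → ℝ) (hv : v 0 > 0) (hne : v 0 ≠ Real.exp (v 1)) :
    ∀ α β : Fin 2,
      (∑ γ : Fin 2, unityVF v γ * ∑ ξ : Fin 2, etaInv β ξ * pd ξ (pd γ (pd α Fpot)) v) =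
        if α = β then 1 else 0 := by
  have hD : v 0 - Real.exp (v 1) ≠ 0 := sub_ne_zero.mpr hne
  intro α β
  fin_cases α <;> fin_cases β <;>
    simp [Fin.sum_univ_two, unityVF, etaInv, pd000 v hv, pd100 v hv, pd010 v hv,
      pd110 v hv, pd001 v hv, pd101 v hv, pd011 v hv, pd111 v hv] <;>
    field_simp <;> ring
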